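/- For powers of 2 N₁, N₂ with 8 ≤ N₁ ≤ N₂, all four Ungerboeck sums S^e_1+S^e_2, S^e_1+S^o_2, S^o_1+S^e_2, S^o_1+S^o_2 have the same minimum Euclidean distance 4·sin(π/(2N₂))·sin(2π/N₁). -/

import Mathlib

open Real

/-- The four Ungerboeck sumsets `S^{b₁}_1 + S^{b₂}_2`: `b = true` selects the
even-index half, `b = false` the odd-index half, of the `N₁`-PSK
`{e^{2πi n/N₁}}` and of the rotated `N₂`-PSK `{e^{2πi n/N₂}·e^{iπ/N₂}}`. -/
noncomputable def ungSum (N₁ N₂ : ℕ) (b₁ b₂ : Bool) : Set ℂ :=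
  {z | ∃ n₁ n₂ : ℕ, n₁ < N₁ ∧ (if b₁ then Even n₁ else Odd n₁) ∧
    n₂ < N₂ ∧ (if b₂ then Even n₂ else Odd n₂) ∧
    z = Complex.exp (2 * Real.pi * n₁ / N₁ * Complex.I) +
        Complex.exp (Real.pi * (2 * n₂ + 1) / N₂ * Complex.I)}




lemma sin_mono {x y : ℝ} (hx : 0 ≤ x) (hxy : x ≤ y) (hy : y ≤ π / 2) :
    Real.sin x ≤ Real.sin y := by
  rcases eq_or_lt_of_le hxy with h | h
  · rw [h]
  · exact le_of_lt (Real.strictMonoOn_sin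
      ⟨by linarith [Real.pi_pos], by linarith⟩ ⟨by linarith [Real.pi_pos], hy⟩ h)

lemma cos_anti {x y : ℝ} (hx : 0 ≤ x) (hxy : x ≤ y) (hy : y ≤ π) :
    Real.cos y ≤ Real.cos x := by
  rcases eq_or_lt_of_le hxy with h | h
  · rw [h]
  · exact le_of_lt (Real.strictAntiOn_cos ⟨hx, by linarith⟩ ⟨by linarith, hy⟩ h)

lemma exists_K (N : ℕ) (hN : 8 ≤ N) (h4 : 4 ∣ N) (j : ℤ) (hj : j ≠ 0)
    (hjlt : 2 * |j| < N) :
    ∃ K : ℕ, 1 ≤ K ∧ 4 * K ≤ N ∧ |Real.sin (2 * π * j / N)| = Real.sin (2 * π * K / N) := by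
  have hNpos : (0:ℝ) < N := by positivity
  have hpi := Real.pi_pos
  set j' : ℕ := j.natAbs with hj'def
  have hj' : (j' : ℤ) = |j| := (Int.abs_eq_natAbs j).symm
  have hj1 : 1 ≤ j' := by
    rcases Nat.eq_zero_or_pos j' with h | h
    · exact absurd (Int.natAbs_eq_zero.mp h) hj
    · exact h
  have hj'N : 2 * j' < N := by
    have : (2 * (j':ℤ)) < N := by rw [hj']; exact_mod_cast hjlt
    exact_mod_cast this
  have hjr : (j' : ℝ) = |(j:ℝ)| := by
    have := congrArg (fun z : ℤ => (z : ℝ)) hj'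
    simpa [Int.cast_abs] using this
  have habs : |Real.sin (2 * π * j / N)| = Real.sin (2 * π * j' / N) := by
    have h1 : |Real.sin (2 * π * j / N)| = |Real.sin (2 * π * j' / N)| := by
      rw [hjr]
      rcases abs_choice ((j:ℝ)) with h | h
      · rw [h]
      · rw [h, show 2 * π * (-(j:ℝ)) / N = -(2 * π * j / N) by ring, Real.sin_neg, abs_neg]
    rw [h1, abs_of_nonneg]
    apply Real.sin_nonneg_of_nonneg_of_le_pi
    · positivity
    · have h2 : 2 * (j' : ℝ) < (N:ℝ) := by exact_mod_cast hj'N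
      rw [div_le_iff₀ hNpos]; nlinarith
  by_cases hc : 4 * j' ≤ N
  · exact ⟨j', hj1, hc, habs⟩
  · refine ⟨N / 2 - j', by omega, by omega, ?_⟩
    rw [habs]
    have hcast : ((N / 2 - j' : ℕ) : ℝ) = (N:ℝ) / 2 - j' := by
      have h2 : 2 ∣ N := by omega
      obtain ⟨m, rfl⟩ := h2
      rw [Nat.mul_div_cancel_left m (by norm_num)]
      push_cast [Nat.cast_sub (by omega : j' ≤ m)]
      ring
    rw [hcast, show 2 * π * ((N:ℝ)/2 - j') / N = π - 2 * π * j' / N by field_simp,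
      Real.sin_pi_sub]

lemma abs_sin_eq (x : ℝ) (h : |x| ≤ π) : |Real.sin x| = Real.sin |x| := by
  rcases abs_choice x with h1 | h1
  · rw [h1, abs_of_nonneg]
    exact Real.sin_nonneg_of_nonneg_of_le_pi (by rw [← h1]; exact abs_nonneg x) (h1 ▸ h)
  · have h0 : 0 ≤ -x := by rw [← h1]; exact abs_nonneg x
    have hle : -x ≤ π := by rw [← h1]; exact h
    have hs : 0 ≤ Real.sin (-x) := Real.sin_nonneg_of_nonneg_of_le_pi h0 hle
    rw [h1, Real.sin_neg]
    rw [Real.sin_neg] at hs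
    exact abs_of_nonpos (by linarith)

lemma cos_bound (N : ℕ) (hN : 8 ≤ N) (h4 : 4 ∣ N) (M : ℤ) (hM : M % 4 = 2) :
    |Real.cos (π * M / (2 * N))| ≤ Real.cos (π / N) := by
  have hNpos : (0:ℝ) < N := by positivity
  have hpi := Real.pi_pos
  obtain ⟨R', Q', hMeq, hR2, hRN⟩ :
      ∃ (R' Q' : ℤ), M = N * Q' + R' ∧ 2 ≤ |R'| ∧ 2 * |R'| ≤ N := by
    set R := M % N with hR
    set Q := M / N with hQ
    have hNZ : (N:ℤ) ≠ 0 := by positivity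
    have hM' : M = N * Q + R := (Int.mul_ediv_add_emod M N).symm
    have hR0 : 0 ≤ R := Int.emod_nonneg M hNZ
    have hRltN : R < N := Int.emod_lt_of_pos M (by positivity)
    have h4' : (4:ℤ) ∣ (N:ℤ) := by exact_mod_cast Int.natCast_dvd_natCast.mpr h4
    have hNQ : (4:ℤ) ∣ (N:ℤ) * Q := h4'.mul_right Q
    have hN8 : (8:ℤ) ≤ (N:ℤ) := by exact_mod_cast hN
    have hR4 : R % 4 = 2 := by omega
    by_cases hc : 2 * R ≤ N
    · exact ⟨R, Q, hM', by rw [abs_of_nonneg hR0]; omega, by rw [abs_of_nonneg hR0]; omega⟩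
    · refine ⟨R - N, Q + 1, by rw [hM']; ring, ?_, ?_⟩
      · rw [abs_of_nonpos (by omega)]; omega
      · rw [abs_of_nonpos (by omega)]; omega
  obtain ⟨m, e, he01, hQ'⟩ : ∃ (m e : ℤ), (e = 0 ∨ e = 1) ∧ Q' = 2 * m + e := by
    rcases Int.even_or_odd Q' with ⟨m, hm⟩ | ⟨m, hm⟩
    · exact ⟨m, 0, Or.inl rfl, by omega⟩
    · exact ⟨m, 1, Or.inr rfl, by omega⟩
  have hN' : (N:ℝ) ≠ 0 := ne_of_gt hNpos
  have hangle : π * M / (2 * N) = (e * (π/2) + π * R' / (2 * N)) + m * π := by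
    rw [hMeq, hQ']; push_cast; field_simp; ring
  set x : ℝ := π * R' / (2 * N) with hx
  have hR2' : (2:ℝ) ≤ |(R':ℝ)| := by rw [← Int.cast_abs]; exact_mod_cast hR2
  have hRN' : 2 * |(R':ℝ)| ≤ N := by rw [← Int.cast_abs]; exact_mod_cast hRN
  have hxabs : |x| = π * |(R':ℝ)| / (2 * N) := by
    rw [hx, abs_div, abs_mul, abs_of_pos hpi, abs_of_pos (by positivity : (0:ℝ) < 2*N)]
  have hxlb : π / N ≤ |x| := by
    rw [hxabs, div_le_div_iff₀ hNpos (by positivity)]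
    have := mul_le_mul_of_nonneg_left hR2' (le_of_lt (mul_pos hpi hNpos))
    nlinarith
  have hxub : |x| ≤ π / 4 := by
    rw [hxabs, div_le_div_iff₀ (by positivity) (by norm_num)]; nlinarith
  have hsplit : |Real.cos (π * M / (2*N))| = |Real.cos (e * (π/2) + x)| := by
    rw [hangle, Real.cos_add, Real.sin_int_mul_pi, mul_zero, sub_zero, abs_mul,
      Real.abs_cos_int_mul_pi, mul_one]
  rw [hsplit]
  rcases he01 with rfl | rfl
  · simp only [Int.cast_zero, zero_mul, zero_add]
    have h2 : |Real.cos x| = Real.cos |x| := by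
      rw [← Real.cos_abs]
      exact abs_of_nonneg (Real.cos_nonneg_of_mem_Icc ⟨by linarith [abs_nonneg x], by linarith⟩)
    rw [h2]
    exact cos_anti (by positivity) hxlb (by linarith)
  · simp only [Int.cast_one, one_mul]
    have h1 : |Real.cos (π/2 + x)| = |Real.sin x| := by
      rw [Real.cos_add, Real.cos_pi_div_two, Real.sin_pi_div_two]
      simp
    rw [h1, abs_sin_eq x (by linarith)]
    have h2 : Real.sin |x| ≤ Real.sin (π/4) :=
      sin_mono (abs_nonneg x) hxub (by linarith)
    have h3 : Real.cos (π/4) ≤ Real.cos (π/N) := by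
      apply cos_anti (by positivity) ?_ (by linarith)
      rw [div_le_div_iff₀ hNpos (by norm_num)]
      nlinarith
    rw [Real.sin_pi_div_four] at h2
    rw [← Real.cos_pi_div_four] at h2
    linarith

lemma key_gap (u A : ℝ) (hu : 0 < u) (hu16 : u ≤ π / 16) (hA0 : 0 ≤ A) (hA : A ≤ π / 2) :
    Real.sin (A - 4 * u) ≤ (2 * Real.cos (2 * u) - 1) * Real.sin A := by
  have hpi := Real.pi_pos
  rw [Real.sin_sub]
  have h4u : Real.cos (4 * u) = 2 * Real.cos (2 * u) ^ 2 - 1 := by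
    rw [show (4:ℝ) * u = 2 * (2 * u) by ring, Real.cos_two_mul]
  have hsA : 0 ≤ Real.sin A := Real.sin_nonneg_of_nonneg_of_le_pi hA0 (by linarith)
  have hcA : 0 ≤ Real.cos A := Real.cos_nonneg_of_mem_Icc ⟨by linarith, hA⟩
  have hs4u : 0 ≤ Real.sin (4 * u) := Real.sin_nonneg_of_nonneg_of_le_pi (by linarith) (by linarith)
  have hc2u : Real.cos (2 * u) ≤ 1 := Real.cos_le_one _
  have hc2u0 : 0 ≤ Real.cos (2 * u) := Real.cos_nonneg_of_mem_Icc ⟨by linarith, by linarith⟩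
  nlinarith [mul_nonneg hcA hs4u, mul_nonneg hsA hc2u0]

set_option maxHeartbeats 1000000 in
lemma caseC (u : ℝ) (hu : 0 < u) (hu16 : u ≤ π / 16) (K₁ K₂ r : ℕ)
    (hr : 1 ≤ r) (hrK : r ≤ K₁) (hK₂ : 1 ≤ K₂)
    (hA : 4 * u * K₁ ≤ π / 2) (hB : 4 * u * K₂ ≤ π / 2) :
    4 * Real.sin u ^ 2 * Real.sin (4 * u * r) ^ 2 ≤
      Real.sin (4 * u * K₁) ^ 2 + Real.sin (4 * u * K₂) ^ 2
        - 2 * Real.sin (4 * u * K₁) * Real.sin (4 * u * K₂) * Real.cos (2 * u) := by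
  have hpi := Real.pi_pos
  set c := Real.cos (2 * u) with hc
  set t₁ := Real.sin (4 * u * K₁) with ht₁
  set t₂ := Real.sin (4 * u * K₂) with ht₂
  set σ := Real.sin (4 * u * r) with hσ
  have hrK' : (r:ℝ) ≤ K₁ := by exact_mod_cast hrK
  have hr' : (1:ℝ) ≤ r := by exact_mod_cast hr
  have hK₂' : (1:ℝ) ≤ K₂ := by exact_mod_cast hK₂
  have hσ0 : 0 ≤ σ := Real.sin_nonneg_of_nonneg_of_le_pi (by positivity) (by nlinarith)
  have hσt₁ : σ ≤ t₁ := sin_mono (by positivity) (by nlinarith) hA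
  have ht₁0 : 0 ≤ t₁ := le_trans hσ0 hσt₁
  have ht₂0 : 0 ≤ t₂ := Real.sin_nonneg_of_nonneg_of_le_pi (by positivity) (by linarith)
  have hc1 : c ≤ 1 := Real.cos_le_one _
  have hc0 : 1/2 ≤ c := by
    rw [hc, ← Real.cos_pi_div_three]
    exact cos_anti (by positivity) (by linarith) (by linarith)
  -- 4 sin² u = 2 (1 - c)
  have hsinsq : 4 * Real.sin u ^ 2 = 2 * (1 - c) := by
    rw [Real.sin_sq_eq_half_sub, hc]; ring
  -- key: 0 ≤ (t₂ - t₁)(t₂ - (2c-1)t₁)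
  have hprod : 0 ≤ (t₂ - t₁) * (t₂ - (2 * c - 1) * t₁) := by
    by_cases hbb : K₁ ≤ K₂
    · have hbb' : (K₁:ℝ) ≤ K₂ := by exact_mod_cast hbb
      have h1 : t₁ ≤ t₂ := sin_mono (by positivity) (by nlinarith) hB
      have h2 : (2 * c - 1) * t₁ ≤ t₁ := by nlinarith
      nlinarith
    · have hK21 : (K₂:ℝ) ≤ (K₁:ℝ) - 1 := by
        have : K₂ + 1 ≤ K₁ := by omega
        have := (Nat.cast_le (α := ℝ)).mpr this
        push_cast at this; linarith
      have h1 : t₂ ≤ Real.sin (4 * u * K₁ - 4 * u) := by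
        rw [ht₂]; apply sin_mono (by positivity) (by nlinarith) (by nlinarith)
      have h2 : Real.sin (4 * u * K₁ - 4 * u) ≤ (2 * c - 1) * t₁ :=
        key_gap u (4 * u * K₁) hu hu16 (by positivity) hA
      have h3 : t₂ ≤ (2 * c - 1) * t₁ := le_trans h1 h2
      have h4 : (2 * c - 1) * t₁ ≤ t₁ := by nlinarith
      nlinarith
  have hexp : 0 ≤ t₂ ^ 2 - 2 * c * t₁ * t₂ + (2 * c - 1) * t₁ ^ 2 := by nlinarith [hprod]
  have hsq : σ ^ 2 ≤ t₁ ^ 2 := by nlinarith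
  have hmul : 2 * (1 - c) * σ ^ 2 ≤ 2 * (1 - c) * t₁ ^ 2 :=
    mul_le_mul_of_nonneg_left hsq (by linarith)
  rw [hsinsq]
  linarith [hexp, hmul]

set_option maxHeartbeats 4000000 in
lemma main_ineq (N₁ N₂ r : ℕ) (h8 : 8 ≤ N₁) (hle : N₁ ≤ N₂) (hrr : r * N₁ = N₂)
    (h41 : 4 ∣ N₁) (h42 : 4 ∣ N₂)
    (j k M : ℤ) (hj : 2 * |j| < N₁) (hk : 2 * |k| < N₂) (hM : M % 4 = 2)
    (hjk : ¬(j = 0 ∧ k = 0)) :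
    4 * Real.sin (π / (2 * N₂)) ^ 2 * Real.sin (2 * π / N₁) ^ 2 ≤
      Real.sin (2 * π * j / N₁) ^ 2 + Real.sin (2 * π * k / N₂) ^ 2 +
        2 * Real.sin (2 * π * j / N₁) * Real.sin (2 * π * k / N₂) * Real.cos (π * M / (2 * N₂)) := by
  have hpi := Real.pi_pos
  have hN1 : (0:ℝ) < N₁ := by
    have h : 0 < N₁ := by omega
    exact_mod_cast h
  have hN2 : (0:ℝ) < N₂ := by
    have h : 0 < N₂ := by omega
    exact_mod_cast h
  have hN28 : 8 ≤ N₂ := le_trans h8 hle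
  set u : ℝ := π / (2 * N₂) with hu
  have hu0 : 0 < u := div_pos hpi (by linarith)
  have hu16 : u ≤ π / 16 := by
    rw [hu, div_le_div_iff₀ (by positivity) (by norm_num)]
    have : (8:ℝ) ≤ N₂ := by exact_mod_cast hN28
    nlinarith
  have hr1 : 1 ≤ r := by
    rcases Nat.eq_zero_or_pos r with h | h
    · subst h; simp at hrr; omega
    · exact h
  have hrN : (r:ℝ) * N₁ = N₂ := by exact_mod_cast hrr
  -- σ = sin(2π/N₁) = sin(4u r)
  have hσeq : 2 * π / N₁ = 4 * u * r := by
    rw [hu]; field_simp; nlinarith [hrN]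
  have hσ1 : Real.sin (2 * π / N₁) ≤ 1 := Real.sin_le_one _
  have hσ0 : 0 ≤ Real.sin (2 * π / N₁) := by
    apply Real.sin_nonneg_of_nonneg_of_le_pi (by positivity)
    rw [div_le_iff₀ hN1]
    have : (8:ℝ) ≤ N₁ := by exact_mod_cast h8
    nlinarith
  have hsinu : Real.sin u ≤ 1 / 2 := by
    rw [show (1:ℝ)/2 = Real.sin (π/6) by rw [Real.sin_pi_div_six]]
    exact sin_mono hu0.le (by linarith) (by linarith)
  have hsinu0 : 0 ≤ Real.sin u := Real.sin_nonneg_of_nonneg_of_le_pi hu0.le (by linarith)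
  have h2u : π / (N₂:ℝ) = 2 * u := by rw [hu]; ring
  have h4ueq : 2 * π / (N₂:ℝ) = 4 * u := by rw [hu]; ring
  -- sin(4u) ≥ 2 sin u
  have hsqrt2 : Real.sqrt 2 / 2 ≤ Real.cos u := by
    rw [← Real.cos_pi_div_four]
    exact cos_anti hu0.le (by linarith) (by linarith)
  have hsqrt2' : Real.sqrt 2 / 2 ≤ Real.cos (2 * u) := by
    rw [← Real.cos_pi_div_four]
    exact cos_anti (by positivity) (by linarith) (by linarith)
  have hsq2 : Real.sqrt 2 ^ 2 = 2 := Real.sq_sqrt (by norm_num)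
  have h4usin : Real.sin (4 * u) = 4 * Real.sin u * Real.cos u * Real.cos (2 * u) := by
    rw [show (4:ℝ) * u = 2 * (2 * u) by ring, Real.sin_two_mul,
      show (2:ℝ) * u = 2 * u by ring, Real.sin_two_mul]
    ring
  have hsqrt2nn : (0:ℝ) ≤ Real.sqrt 2 / 2 := by positivity
  have hcu0 : 0 ≤ Real.cos u := le_trans hsqrt2nn hsqrt2
  have h12 : (1:ℝ)/2 ≤ Real.cos u * Real.cos (2 * u) := by
    have := mul_le_mul hsqrt2 hsqrt2' hsqrt2nn hcu0
    nlinarith [this, hsq2]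
  have h2sinu : 2 * Real.sin u ≤ Real.sin (4 * u) := by
    rw [h4usin]
    nlinarith [mul_nonneg hsinu0 (by linarith : (0:ℝ) ≤ Real.cos u * Real.cos (2 * u) - 1/2)]
  by_cases hjz : j = 0
  · -- j = 0, k ≠ 0
    have hkz : k ≠ 0 := fun h => hjk ⟨hjz, h⟩
    subst hjz
    simp only [Int.cast_zero, mul_zero, zero_div, Real.sin_zero]
    obtain ⟨K, hK1, hK4, hKeq⟩ := exists_K N₂ hN28 h42 k hkz hk
    have hK1' : (1:ℝ) ≤ K := by exact_mod_cast hK1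
    have hK4' : 4 * (K:ℝ) ≤ N₂ := by exact_mod_cast hK4
    have hs2 : Real.sin (2 * π / N₂) ≤ |Real.sin (2 * π * k / N₂)| := by
      rw [hKeq]
      apply sin_mono (by positivity)
      · rw [div_le_div_iff₀ hN2 hN2]
        nlinarith [mul_le_mul_of_nonneg_right hK1' (by positivity : (0:ℝ) ≤ 2*π*N₂)]
      · rw [div_le_iff₀ hN2]
        nlinarith [mul_le_mul_of_nonneg_left hK4' hpi.le]
    have habs : Real.sin (2 * π / N₂) ^ 2 ≤ Real.sin (2 * π * k / N₂) ^ 2 := by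
      rw [← sq_abs (Real.sin (2 * π * k / N₂))]
      apply pow_le_pow_left₀ (Real.sin_nonneg_of_nonneg_of_le_pi (by positivity)
        (by rw [h4ueq]; linarith)) hs2 2
    rw [h4ueq] at habs
    have hq1 : Real.sin (2 * π / N₁) ^ 2 ≤ 1 := by nlinarith
    have hq2 : 4 * Real.sin u ^ 2 * Real.sin (2 * π / N₁) ^ 2 ≤ 4 * Real.sin u ^ 2 := by
      nlinarith [sq_nonneg (Real.sin u)]
    have hs4u0 : 0 ≤ Real.sin (4 * u) := by linarith
    have hq3 : 4 * Real.sin u ^ 2 ≤ Real.sin (4 * u) ^ 2 := by nlinarith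
    nlinarith [habs, hq2, hq3]
  · by_cases hkz : k = 0
    · -- k = 0, j ≠ 0
      subst hkz
      simp only [Int.cast_zero, mul_zero, zero_div, Real.sin_zero]
      obtain ⟨K, hK1, hK4, hKeq⟩ := exists_K N₁ h8 h41 j hjz hj
      have hK1' : (1:ℝ) ≤ K := by exact_mod_cast hK1
      have hK4' : 4 * (K:ℝ) ≤ N₁ := by exact_mod_cast hK4
      have hs1 : Real.sin (2 * π / N₁) ≤ |Real.sin (2 * π * j / N₁)| := by
        rw [hKeq]
        apply sin_mono (by positivity)
        · rw [div_le_div_iff₀ hN1 hN1]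
          nlinarith [mul_le_mul_of_nonneg_right hK1' (by positivity : (0:ℝ) ≤ 2*π*N₁)]
        · rw [div_le_iff₀ hN1]
          nlinarith [mul_le_mul_of_nonneg_left hK4' hpi.le]
      have habs : Real.sin (2 * π / N₁) ^ 2 ≤ Real.sin (2 * π * j / N₁) ^ 2 := by
        rw [← sq_abs (Real.sin (2 * π * j / N₁))]
        exact pow_le_pow_left₀ hσ0 hs1 2
      have h14 : 4 * Real.sin u ^ 2 ≤ 1 := by nlinarith
      have : 4 * Real.sin u ^ 2 * Real.sin (2 * π / N₁) ^ 2 ≤ Real.sin (2 * π / N₁) ^ 2 := by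
        nlinarith [mul_nonneg (sq_nonneg (Real.sin (2 * π / N₁))) (sub_nonneg.mpr h14)]
      nlinarith [habs]
    · -- both nonzero
      obtain ⟨K₁', hK11, hK14, hK1eq⟩ := exists_K N₁ h8 h41 j hjz hj
      obtain ⟨K₂, hK21, hK24, hK2eq⟩ := exists_K N₂ hN28 h42 k hkz hk
      have hK11' : (1:ℝ) ≤ K₁' := by exact_mod_cast hK11
      have hK14' : 4 * (K₁':ℝ) ≤ N₁ := by exact_mod_cast hK14
      have hK21' : (1:ℝ) ≤ K₂ := by exact_mod_cast hK21
      have hK24' : 4 * (K₂:ℝ) ≤ N₂ := by exact_mod_cast hK24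
      set s₁ := Real.sin (2 * π * j / N₁) with hs₁
      set s₂ := Real.sin (2 * π * k / N₂) with hs₂
      have e1 : |s₁| = Real.sin (4 * u * ((r * K₁' : ℕ) : ℝ)) := by
        rw [hK1eq]; congr 1
        push_cast
        rw [hu, ← hrN]
        have hr0 : (r:ℝ) ≠ 0 := by positivity
        have hN10 : (N₁:ℝ) ≠ 0 := ne_of_gt hN1
        field_simp
        ring
      have e2 : |s₂| = Real.sin (4 * u * (K₂ : ℝ)) := by
        rw [hK2eq]; congr 1
        rw [hu]; field_simp; ring
      have hcosb : |Real.cos (π * M / (2 * N₂))| ≤ Real.cos (2 * u) := by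
        have := cos_bound N₂ hN28 h42 M hM
        rwa [h2u] at this
      have hcross : -(2 * |s₁| * |s₂| * Real.cos (2 * u)) ≤
          2 * s₁ * s₂ * Real.cos (π * M / (2 * N₂)) := by
        have h1 : |2 * s₁ * s₂ * Real.cos (π * M / (2 * N₂))| ≤
            2 * |s₁| * |s₂| * Real.cos (2 * u) := by
          rw [abs_mul, abs_mul, abs_mul, abs_of_nonneg (by norm_num : (0:ℝ) ≤ 2)]
          apply mul_le_mul_of_nonneg_left hcosb (by positivity)
        linarith [neg_abs_le (2 * s₁ * s₂ * Real.cos (π * M / (2 * N₂)))]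
      have hCC := caseC u hu0 hu16 (r * K₁') K₂ r hr1
        (Nat.le_mul_of_pos_right r hK11) hK21 ?_ ?_
      · rw [hσeq]
        rw [← e1, ← e2] at hCC
        calc 4 * Real.sin u ^ 2 * Real.sin (4 * u * r) ^ 2
            ≤ |s₁| ^ 2 + |s₂| ^ 2 - 2 * |s₁| * |s₂| * Real.cos (2 * u) := hCC
          _ ≤ s₁ ^ 2 + s₂ ^ 2 + 2 * s₁ * s₂ * Real.cos (π * M / (2 * N₂)) := by
              rw [sq_abs, sq_abs]; linarith [hcross]
      · -- 4u(rK₁') ≤ π/2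
        push_cast
        have heq : 4 * u * ((r:ℝ) * K₁') = 2 * π * K₁' / N₁ := by
          rw [hu, ← hrN]
          have hr0 : (r:ℝ) ≠ 0 := by positivity
          have hN10 : (N₁:ℝ) ≠ 0 := ne_of_gt hN1
          field_simp
          ring
        rw [heq, div_le_div_iff₀ hN1 (by norm_num : (0:ℝ) < 2)]
        nlinarith [mul_le_mul_of_nonneg_left hK14' hpi.le]
      · have heq : 4 * u * (K₂:ℝ) = 2 * π * K₂ / N₂ := by
          rw [hu]; field_simp; ring
        rw [heq, div_le_div_iff₀ hN2 (by norm_num : (0:ℝ) < 2)]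
        nlinarith [mul_le_mul_of_nonneg_left hK24' hpi.le]


lemma expI_sub_expI_neg (s : ℝ) :
    Complex.exp ((s:ℂ) * Complex.I) - Complex.exp (-(s:ℂ) * Complex.I) = 2 * Complex.I * (Real.sin s : ℂ) := by
  rw [Complex.ofReal_sin, Complex.sin]
  have hI : (Complex.I : ℂ) ≠ 0 := Complex.I_ne_zero
  field_simp
  ring_nf
  simp [Complex.I_sq]
  ring

lemma chord (x y : ℝ) :
    Complex.exp (x * Complex.I) - Complex.exp (y * Complex.I) =
      2 * Complex.I * (Real.sin ((x - y) / 2) : ℂ) * Complex.exp ((((x + y) / 2 : ℝ)) * Complex.I) := by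
  have hx : (x : ℂ) = ((x + y) / 2 : ℝ) + ((x - y) / 2 : ℝ) := by push_cast; ring
  have hy : (y : ℂ) = ((x + y) / 2 : ℝ) + -((x - y) / 2 : ℝ) := by push_cast; ring
  rw [hx, hy, add_mul, add_mul, Complex.exp_add, Complex.exp_add, ← mul_sub,
    expI_sub_expI_neg]
  ring

lemma abs_comb (s₁ s₂ A B : ℝ) :
    (‖(s₁ : ℂ) * Complex.exp ((A:ℝ) * Complex.I) + (s₂ : ℂ) * Complex.exp ((B:ℝ) * Complex.I)‖) ^ 2 =
      s₁ ^ 2 + s₂ ^ 2 + 2 * s₁ * s₂ * Real.cos (A - B) := by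
  have h : (s₁ : ℂ) * Complex.exp ((A:ℝ) * Complex.I) + (s₂ : ℂ) * Complex.exp ((B:ℝ) * Complex.I)
      = ((s₁ * Real.cos A + s₂ * Real.cos B : ℝ) : ℂ) +
        ((s₁ * Real.sin A + s₂ * Real.sin B : ℝ) : ℂ) * Complex.I := by
    rw [Complex.exp_mul_I, Complex.exp_mul_I]
    push_cast [Complex.ofReal_cos, Complex.ofReal_sin]
    ring
  rw [h, Complex.sq_norm, Complex.normSq_add_mul_I, Real.cos_sub]
  nlinarith [Real.sin_sq_add_cos_sq A, Real.sin_sq_add_cos_sq B]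

lemma dist_formula (N₁ N₂ : ℕ) (hN₁ : (0:ℝ) < N₁) (hN₂ : (0:ℝ) < N₂) (a b c d : ℕ) :
    (‖(Complex.exp ((2*π*(a:ℝ)/N₁ : ℝ) * Complex.I) +
        Complex.exp ((π*(2*(c:ℝ)+1)/N₂ : ℝ) * Complex.I))
      - (Complex.exp ((2*π*(b:ℝ)/N₁ : ℝ) * Complex.I) +
        Complex.exp ((π*(2*(d:ℝ)+1)/N₂ : ℝ) * Complex.I))‖) ^ 2
    = 4 * (Real.sin (π*((a:ℝ)-b)/N₁)^2 + Real.sin (π*((c:ℝ)-d)/N₂)^2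
        + 2 * Real.sin (π*((a:ℝ)-b)/N₁) * Real.sin (π*((c:ℝ)-d)/N₂)
          * Real.cos (π*((a:ℝ)+b)/N₁ - π*((c:ℝ)+d+1)/N₂)) := by
  have hN₁' : (N₁:ℝ) ≠ 0 := ne_of_gt hN₁
  have hN₂' : (N₂:ℝ) ≠ 0 := ne_of_gt hN₂
  have h1 : ((2*π*(a:ℝ)/N₁ : ℝ) - (2*π*(b:ℝ)/N₁ : ℝ)) / 2 = π*((a:ℝ)-b)/N₁ := by
    field_simp
  have h2 : ((2*π*(a:ℝ)/N₁ : ℝ) + (2*π*(b:ℝ)/N₁ : ℝ)) / 2 = π*((a:ℝ)+b)/N₁ := by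
    field_simp
  have h3 : ((π*(2*(c:ℝ)+1)/N₂ : ℝ) - (π*(2*(d:ℝ)+1)/N₂ : ℝ)) / 2 = π*((c:ℝ)-d)/N₂ := by
    field_simp; ring
  have h4 : ((π*(2*(c:ℝ)+1)/N₂ : ℝ) + (π*(2*(d:ℝ)+1)/N₂ : ℝ)) / 2 = π*((c:ℝ)+d+1)/N₂ := by
    field_simp; ring
  have key : (Complex.exp ((2*π*(a:ℝ)/N₁ : ℝ) * Complex.I) +
        Complex.exp ((π*(2*(c:ℝ)+1)/N₂ : ℝ) * Complex.I))
      - (Complex.exp ((2*π*(b:ℝ)/N₁ : ℝ) * Complex.I) +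
        Complex.exp ((π*(2*(d:ℝ)+1)/N₂ : ℝ) * Complex.I))
      = 2 * Complex.I * ((Real.sin (π*((a:ℝ)-b)/N₁) : ℂ) *
          Complex.exp ((π*((a:ℝ)+b)/N₁ : ℝ) * Complex.I) +
        (Real.sin (π*((c:ℝ)-d)/N₂) : ℂ) *
          Complex.exp ((π*((c:ℝ)+d+1)/N₂ : ℝ) * Complex.I)) := by
    have e1 := chord (2*π*(a:ℝ)/N₁) (2*π*(b:ℝ)/N₁)
    have e2 := chord (π*(2*(c:ℝ)+1)/N₂) (π*(2*(d:ℝ)+1)/N₂)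
    rw [h1, h2] at e1
    rw [h3, h4] at e2
    calc _ = (Complex.exp ((2*π*(a:ℝ)/N₁ : ℝ) * Complex.I) -
          Complex.exp ((2*π*(b:ℝ)/N₁ : ℝ) * Complex.I)) +
          (Complex.exp ((π*(2*(c:ℝ)+1)/N₂ : ℝ) * Complex.I) -
          Complex.exp ((π*(2*(d:ℝ)+1)/N₂ : ℝ) * Complex.I)) := by ring
      _ = _ := by rw [e1, e2]; ring
  rw [key]
  rw [norm_mul, mul_pow]
  have habsI : ‖2 * Complex.I‖ = 2 := by
    simp
  rw [habsI, abs_comb]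
  ring

noncomputable def pt (N₁ N₂ n m : ℕ) : ℂ :=
  Complex.exp ((2*π*(n:ℝ)/N₁ : ℝ) * Complex.I) + Complex.exp ((π*(2*(m:ℝ)+1)/N₂ : ℝ) * Complex.I)

set_option maxHeartbeats 1000000 in
lemma mem_part (N₁ N₂ r : ℕ) (h8 : 8 ≤ N₁) (hN28 : 8 ≤ N₂) (h41 : 4 ∣ N₁) (h42 : 4 ∣ N₂)
    (hrr : r * N₁ = N₂) (hr1 : 1 ≤ r) (ε₁ ε₂ : ℕ) (hε₁ : ε₁ ≤ 1) (hε₂ : ε₂ ≤ 1) :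
    ∃ a c b d : ℕ, a < N₁ ∧ b < N₁ ∧ c < N₂ ∧ d < N₂ ∧
      a % 2 = ε₁ ∧ b % 2 = ε₁ ∧ c % 2 = ε₂ ∧ d % 2 = ε₂ ∧
      pt N₁ N₂ a c ≠ pt N₁ N₂ b d ∧
      4 * Real.sin (π / (2 * N₂)) * Real.sin (2 * π / N₁) =
        ‖pt N₁ N₂ a c - pt N₁ N₂ b d‖ := by
  have hpi := Real.pi_pos
  have hN1 : (0:ℝ) < N₁ := by
    have h : 0 < N₁ := by omega
    exact_mod_cast h
  have hN2 : (0:ℝ) < N₂ := by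
    have h : 0 < N₂ := by omega
    exact_mod_cast h
  have hN1' : (N₁:ℝ) ≠ 0 := ne_of_gt hN1
  have hN2' : (N₂:ℝ) ≠ 0 := ne_of_gt hN2
  have hrN : (r:ℝ) * N₁ = N₂ := by exact_mod_cast hrr
  have hr8 : 8 * r ≤ N₂ := by
    calc 8 * r ≤ N₁ * r := by exact Nat.mul_le_mul_right r h8
    _ = r * N₁ := Nat.mul_comm N₁ r
    _ = N₂ := hrr
  set R1 : ℕ := r * ε₁ with hR1
  have hR1le : R1 ≤ r := by
    rw [hR1]
    calc r * ε₁ ≤ r * 1 := Nat.mul_le_mul_left r hε₁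
    _ = r := Nat.mul_one r
  set η : ℕ := (R1 + 1 + ε₂) % 2 with hη
  have hηle : η ≤ 1 := by omega
  set n₂ : ℕ := N₂/2 - 1 + R1 + η with hn₂
  have h18 : (8:ℝ) ≤ N₁ := by exact_mod_cast h8
  have h28 : (8:ℝ) ≤ N₂ := by exact_mod_cast hN28
  have key : 4 * Real.sin (π / (2 * N₂)) * Real.sin (2 * π / N₁) =
      ‖pt N₁ N₂ ε₁ n₂ - pt N₁ N₂ (ε₁+2) (n₂+2*r)‖ := by
    have hr0 : (r:ℝ) ≠ 0 := by
      have h : (0:ℝ) < r := by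
        have : 0 < r := hr1
        exact_mod_cast this
      exact ne_of_gt h
    have hR1cast : ((R1:ℕ):ℝ) = (r:ℝ) * ε₁ := by rw [hR1]; push_cast; ring
    have h2N2 : 2 ∣ N₂ := by omega
    have hn2cast : ((n₂:ℕ):ℝ) = (N₂:ℝ)/2 - 1 + R1 + η := by
      obtain ⟨m2, hm2⟩ : ∃ m, N₂ = 2*m := ⟨N₂/2, by omega⟩
      have hm24 : 4 ≤ m2 := by omega
      have hn₂' : n₂ = m2 - 1 + R1 + η := by rw [hn₂]; omega
      rw [hn₂', hm2]
      push_cast [Nat.cast_sub (by omega : 1 ≤ m2)]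
      ring
    have hsq := dist_formula N₁ N₂ hN1 hN2 ε₁ (ε₁+2) n₂ (n₂+2*r)
    have ea : π*((ε₁:ℝ) - ((ε₁+2:ℕ):ℝ))/N₁ = -(2*π/N₁) := by push_cast; ring
    have eb : π*((n₂:ℝ) - ((n₂+2*r:ℕ):ℝ))/N₂ = -(2*π/N₁) := by
      push_cast
      rw [← hrN]
      field_simp
      ring
    have ecarg : π*((ε₁:ℝ)+((ε₁+2:ℕ):ℝ))/N₁ - π*((n₂:ℝ)+((n₂+2*r:ℕ):ℝ)+1)/N₂
        = -(π + (2*(η:ℝ)-1)*π/N₂) := by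
      push_cast
      rw [hn2cast, ← hrN, hR1cast]
      field_simp
      ring
    have ecos : Real.cos (π*((ε₁:ℝ)+((ε₁+2:ℕ):ℝ))/N₁ - π*((n₂:ℝ)+((n₂+2*r:ℕ):ℝ)+1)/N₂)
        = -(Real.cos (π/N₂)) := by
      rw [ecarg, Real.cos_neg]
      have : η = 0 ∨ η = 1 := by omega
      rcases this with h | h
      · rw [h]
        push_cast
        rw [show π + (2*(0:ℝ)-1)*π/N₂ = π - π/N₂ by ring, Real.cos_pi_sub]
      · rw [h]
        push_cast
        rw [show π + (2*(1:ℝ)-1)*π/N₂ = π + π/N₂ by ring]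
        simp [Real.cos_add]
    have hcos2u : Real.cos (π/N₂) = 1 - 2 * Real.sin (π/(2*N₂))^2 := by
      have := Real.sin_sq_eq_half_sub (π/(2*N₂))
      have h2u : 2*(π/(2*(N₂:ℝ))) = π/N₂ := by ring
      rw [h2u] at this
      linarith
    rw [ea, eb, ecos, hcos2u, Real.sin_neg] at hsq
    have hsq' : ‖pt N₁ N₂ ε₁ n₂ - pt N₁ N₂ (ε₁+2) (n₂+2*r)‖ ^ 2
        = (4 * Real.sin (π/(2*N₂)) * Real.sin (2*π/N₁)) ^ 2 := by
      rw [show pt N₁ N₂ ε₁ n₂ - pt N₁ N₂ (ε₁+2) (n₂+2*r) = _ from rfl]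
      rw [pt, pt, hsq]
      ring
    have ht0 : 0 ≤ 4 * Real.sin (π/(2*N₂)) * Real.sin (2*π/N₁) := by
      have h1 : 0 ≤ Real.sin (π/(2*N₂)) :=
        Real.sin_nonneg_of_nonneg_of_le_pi (by positivity)
          (by rw [div_le_iff₀ (by positivity : (0:ℝ) < 2*N₂)]; nlinarith)
      have h2 : 0 ≤ Real.sin (2*π/N₁) :=
        Real.sin_nonneg_of_nonneg_of_le_pi (by positivity)
          (by rw [div_le_iff₀ hN1]; nlinarith)
      positivity
    have hpq0 : (0:ℝ) ≤ ‖pt N₁ N₂ ε₁ n₂ - pt N₁ N₂ (ε₁+2) (n₂+2*r)‖ :=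
      norm_nonneg _
    exact le_antisymm
      (le_of_pow_le_pow_left₀ two_ne_zero hpq0 (le_of_eq hsq'.symm))
      (le_of_pow_le_pow_left₀ two_ne_zero ht0 (le_of_eq hsq'))
  have htpos : 0 < 4 * Real.sin (π / (2 * N₂)) * Real.sin (2 * π / N₁) := by
    have h1 : 0 < Real.sin (π/(2*N₂)) := by
      apply Real.sin_pos_of_pos_of_lt_pi (by positivity)
      rw [div_lt_iff₀ (by positivity : (0:ℝ) < 2*N₂)]
      nlinarith
    have h2 : 0 < Real.sin (2*π/N₁) := by
      apply Real.sin_pos_of_pos_of_lt_pi (by positivity)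
      rw [div_lt_iff₀ hN1]
      nlinarith
    positivity
  refine ⟨ε₁, n₂, ε₁ + 2, n₂ + 2*r, by omega, by omega, by omega, by omega,
    by omega, by omega, by omega, by omega, ?_, key⟩
  intro h
  rw [h, sub_self, norm_zero] at key
  exact absurd key (ne_of_gt htpos)

set_option maxHeartbeats 1000000 in
lemma lower_part (N₁ N₂ r : ℕ) (h8 : 8 ≤ N₁) (hle : N₁ ≤ N₂) (h41 : 4 ∣ N₁) (h42 : 4 ∣ N₂)
    (hrr : r * N₁ = N₂) (a b c d : ℕ)
    (haN : a < N₁) (hbN : b < N₁) (hcN : c < N₂) (hdN : d < N₂)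
    (hab : a % 2 = b % 2) (hcd : c % 2 = d % 2)
    (hne : pt N₁ N₂ a c ≠ pt N₁ N₂ b d) :
    4 * Real.sin (π / (2 * N₂)) * Real.sin (2 * π / N₁) ≤
      ‖pt N₁ N₂ a c - pt N₁ N₂ b d‖ := by
  have hpi := Real.pi_pos
  have hN1 : (0:ℝ) < N₁ := by
    have h : 0 < N₁ := by omega
    exact_mod_cast h
  have hN2 : (0:ℝ) < N₂ := by
    have h : 0 < N₂ := by omega
    exact_mod_cast h
  have hN1' : (N₁:ℝ) ≠ 0 := ne_of_gt hN1
  have hN2' : (N₂:ℝ) ≠ 0 := ne_of_gt hN2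
  have hrN : (r:ℝ) * N₁ = N₂ := by exact_mod_cast hrr
  -- integers j, k, M
  obtain ⟨j, hjdef⟩ : ∃ j : ℤ, (a:ℤ) - b = 2 * j := ⟨((a:ℤ)-b)/2, by omega⟩
  obtain ⟨k, hkdef⟩ : ∃ k : ℤ, (c:ℤ) - d = 2 * k := ⟨((c:ℤ)-d)/2, by omega⟩
  obtain ⟨s, hsdef⟩ : ∃ s : ℤ, (a:ℤ) + b = 2 * s := ⟨((a:ℤ)+b)/2, by omega⟩
  obtain ⟨t, htdef⟩ : ∃ t : ℤ, (c:ℤ) + d = 2 * t := ⟨((c:ℤ)+d)/2, by omega⟩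
  set M : ℤ := 2 * r * ((a:ℤ) + b) - 2 * ((c:ℤ) + d) - 2 with hM
  have hMmod : M % 4 = 2 := by
    have h' : M = 4 * ((r:ℤ) * s - t) - 2 := by rw [hM, hsdef, htdef]; ring
    omega
  have haZ : (a:ℤ) < N₁ := by exact_mod_cast haN
  have hbZ : (b:ℤ) < N₁ := by exact_mod_cast hbN
  have hcZ : (c:ℤ) < N₂ := by exact_mod_cast hcN
  have hdZ : (d:ℤ) < N₂ := by exact_mod_cast hdN
  have hj2 : 2 * |j| < N₁ := by
    have h1 : |2*j| < N₁ := by rw [abs_lt]; constructor <;> omega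
    calc (2:ℤ)*|j| = |2*j| := by rw [abs_mul]; simp
    _ < _ := h1
  have hk2 : 2 * |k| < N₂ := by
    have h1 : |2*k| < N₂ := by rw [abs_lt]; constructor <;> omega
    calc (2:ℤ)*|k| = |2*k| := by rw [abs_mul]; simp
    _ < _ := h1
  have hjk : ¬(j = 0 ∧ k = 0) := by
    rintro ⟨hj0, hk0⟩
    apply hne
    have hab' : a = b := by omega
    have hcd' : c = d := by omega
    rw [hab', hcd']
  -- the distance squared
  have hsq := dist_formula N₁ N₂ hN1 hN2 a b c d
  have e1 : π*((a:ℝ)-b)/N₁ = 2*π*(j:ℤ)/N₁ := by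
    have : (a:ℝ) - b = 2*(j:ℝ) := by exact_mod_cast hjdef
    rw [this]; ring
  have e2 : π*((c:ℝ)-d)/N₂ = 2*π*(k:ℤ)/N₂ := by
    have : (c:ℝ) - d = 2*(k:ℝ) := by exact_mod_cast hkdef
    rw [this]; ring
  have e3 : π*((a:ℝ)+b)/N₁ - π*((c:ℝ)+d+1)/N₂ = π*(M:ℤ)/(2*N₂) := by
    have hM' : ((M:ℤ):ℝ) = 2*(r:ℝ)*((a:ℝ)+b) - 2*((c:ℝ)+d) - 2 := by
      rw [hM]; push_cast; ring
    rw [hM', ← hrN]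
    have hr0 : (r:ℝ) ≠ 0 := by
      intro h0
      rw [h0, zero_mul] at hrN
      exact hN2' hrN.symm
    field_simp
    ring
  rw [e1, e2, e3] at hsq
  have hineq := main_ineq N₁ N₂ r h8 hle hrr h41 h42 j k M hj2 hk2 hMmod hjk
  have hfinal : (4 * Real.sin (π / (2 * N₂)) * Real.sin (2 * π / N₁)) ^ 2 ≤
      ‖pt N₁ N₂ a c - pt N₁ N₂ b d‖ ^ 2 := by
    rw [show pt N₁ N₂ a c - pt N₁ N₂ b d = _ from rfl, pt, pt, hsq]
    nlinarith [hineq]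
  exact le_of_pow_le_pow_left₀ two_ne_zero (norm_nonneg _) hfinal

/-- For powers of 2 `N₁, N₂` with `8 ≤ N₁ ≤ N₂`, all four
Ungerboeck sumsets `S^e_1+S^e_2`, `S^e_1+S^o_2`, `S^o_1+S^e_2`, `S^o_1+S^o_2`
have the same minimum Euclidean distance `4·sin(π/(2N₂))·sin(2π/N₁)`. -/
theorem stmt_16 (N₁ N₂ u₁ u₂ : ℕ) (h1 : N₁ = 2 ^ u₁) (h2 : N₂ = 2 ^ u₂)
    (h8 : 8 ≤ N₁) (hle : N₁ ≤ N₂) :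
    ∀ b₁ b₂ : Bool,
      IsLeast {d : ℝ | ∃ p ∈ ungSum N₁ N₂ b₁ b₂, ∃ q ∈ ungSum N₁ N₂ b₁ b₂,
          p ≠ q ∧ d = ‖p - q‖}
        (4 * sin (π / (2 * N₂)) * sin (2 * π / N₁)) := by
  intro b₁ b₂
  have hu13 : 3 ≤ u₁ := by
    by_contra hcon
    push_neg at hcon
    interval_cases u₁ <;> omega
  have hu12 : u₁ ≤ u₂ := by
    by_contra hcon
    push_neg at hcon
    have : 2 ^ u₂ < 2 ^ u₁ := Nat.pow_lt_pow_right (by norm_num) hcon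
    omega
  have hu23 : 3 ≤ u₂ := le_trans hu13 hu12
  set r : ℕ := 2 ^ (u₂ - u₁) with hr
  have hrr : r * N₁ = N₂ := by
    rw [hr, h1, h2, ← pow_add]
    congr 1
    omega
  have h41 : 4 ∣ N₁ := ⟨2 ^ (u₁ - 2), by
    rw [h1, show (4:ℕ) = 2^2 by norm_num, ← pow_add]; congr 1; omega⟩
  have h42 : 4 ∣ N₂ := ⟨2 ^ (u₂ - 2), by
    rw [h2, show (4:ℕ) = 2^2 by norm_num, ← pow_add]; congr 1; omega⟩
  have hN28 : 8 ≤ N₂ := le_trans h8 hle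
  have hr1 : 1 ≤ r := Nat.one_le_two_pow
  have hcast : ∀ (n m : ℕ),
      Complex.exp (2 * (π:ℂ) * n / N₁ * Complex.I) +
        Complex.exp ((π:ℂ) * (2 * m + 1) / N₂ * Complex.I) = pt N₁ N₂ n m := by
    intro n m
    rw [pt]
    congr 2
    · push_cast; ring
    · push_cast; ring
  constructor
  · -- membership
    obtain ⟨a, c, b, d, haN, hbN, hcN, hdN, ha2, hb2, hc2, hd2, hne, heq⟩ :=
      mem_part N₁ N₂ r h8 hN28 h41 h42 hrr hr1 (if b₁ then 0 else 1) (if b₂ then 0 else 1)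
        (by cases b₁ <;> norm_num) (by cases b₂ <;> norm_num)
    refine ⟨pt N₁ N₂ a c, ⟨a, c, haN, ?_, hcN, ?_, (hcast a c).symm⟩,
      pt N₁ N₂ b d, ⟨b, d, hbN, ?_, hdN, ?_, (hcast b d).symm⟩, hne, heq⟩
    · cases b₁ <;> simp_all [Nat.even_iff, Nat.odd_iff]
    · cases b₂ <;> simp_all [Nat.even_iff, Nat.odd_iff]
    · cases b₁ <;> simp_all [Nat.even_iff, Nat.odd_iff]
    · cases b₂ <;> simp_all [Nat.even_iff, Nat.odd_iff]
  · -- lower bound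
    rintro x ⟨p, ⟨a, c, haN, hpar1, hcN, hpar2, rfl⟩,
      q, ⟨b, d, hbN, hpar3, hdN, hpar4, rfl⟩, hne, rfl⟩
    rw [hcast a c, hcast b d] at hne ⊢
    apply lower_part N₁ N₂ r h8 hle h41 h42 hrr a b c d haN hbN hcN hdN ?_ ?_ hne
    · cases b₁ <;> simp_all [Nat.even_iff, Nat.odd_iff]
    · cases b₂ <;> simp_all [Nat.even_iff, Nat.odd_iff]
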